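/- Let G = (V,E) be a directed graph, let E⁺ be a set of edges disjoint from E, and let G' = (V, E ∪ E⁺). Let V_aff be the set of endpoints of edges in E⁺. Define a directed graph H on node set V_aff whose edge set is E⁺ together with all pairs (u,v) ∈ V_aff × V_aff such that v is reachable from u in G. Then for all nodes s,t ∈ V: t is reachable from s in G' if and only if t is reachable from s in G, or there exist x₁, x₂ ∈ V_aff such that x₁ is reachable from s in G, x₂ is reachable from x₁ in H, and t is reachable from x₂ in G. -/

import Mathlib

variable {V : Type*}

/-- Affected nodes: endpoints of edges in `Ep`. -/
def Vaff (Ep : V → V → Prop) (x : V) : Prop := ∃ y, Ep x y ∨ Ep y x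

/-- Edge relation of the auxiliary graph `H` on the affected nodes:
inserted edges together with reachability (in `E`) pairs of affected nodes. -/
def Hrel (E Ep : V → V → Prop) (u v : V) : Prop :=
  Vaff Ep u ∧ Vaff Ep v ∧ (Ep u v ∨ Relation.ReflTransGen E u v)

theorem hrel_reach {E Ep : V → V → Prop} {a b : V}
    (h : Relation.ReflTransGen (Hrel E Ep) a b) :
    Relation.ReflTransGen (fun u v => E u v ∨ Ep u v) a b := by
  induction h with
  | refl => exact .refl
  | tail _ hstep ih =>
    rcases hstep with ⟨_, _, hEp | hE⟩
    · exact ih.tail (Or.inr hEp)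
    · exact ih.trans (Relation.ReflTransGen.mono (fun u v h => Or.inl h) _ _ hE)

theorem stmt3 (E Ep : V → V → Prop) (hdisj : ∀ u v, ¬ (E u v ∧ Ep u v)) :
    ∀ s t : V,
      Relation.ReflTransGen (fun u v => E u v ∨ Ep u v) s t ↔
        (Relation.ReflTransGen E s t ∨
          ∃ x₁ x₂, Vaff Ep x₁ ∧ Vaff Ep x₂ ∧
            Relation.ReflTransGen E s x₁ ∧
            Relation.ReflTransGen (Hrel E Ep) x₁ x₂ ∧
            Relation.ReflTransGen E x₂ t) := by
  intro s t
  constructor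
  · intro h
    induction h with
    | refl => exact Or.inl .refl
    | @tail b c hsb hbc ih =>
      rcases ih with hE | ⟨x₁, x₂, ha₁, ha₂, h1, h2, h3⟩
      · rcases hbc with hbc | hbc
        · exact Or.inl (hE.tail hbc)
        · refine Or.inr ⟨b, c, ⟨c, Or.inl hbc⟩, ⟨b, Or.inr hbc⟩, hE, ?_, .refl⟩
          exact .single ⟨⟨c, Or.inl hbc⟩, ⟨b, Or.inr hbc⟩, Or.inl hbc⟩
      · rcases hbc with hbc | hbc
        · exact Or.inr ⟨x₁, x₂, ha₁, ha₂, h1, h2, h3.tail hbc⟩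
        · have hb : Vaff Ep b := ⟨c, Or.inl hbc⟩
          have hc : Vaff Ep c := ⟨b, Or.inr hbc⟩
          refine Or.inr ⟨x₁, c, ha₁, hc, h1, ?_, .refl⟩
          exact (h2.tail ⟨ha₂, hb, Or.inr h3⟩).tail ⟨hb, hc, Or.inl hbc⟩
  · rintro (h | ⟨x₁, x₂, ha₁, ha₂, h1, h2, h3⟩)
    · exact Relation.ReflTransGen.mono (fun u v h => Or.inl h) _ _ h
    · have l1 : Relation.ReflTransGen (fun u v => E u v ∨ Ep u v) s x₁ :=
        Relation.ReflTransGen.mono (fun u v h => Or.inl h) _ _ h1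
      exact (l1.trans (hrel_reach h2)).trans (Relation.ReflTransGen.mono (fun u v h => Or.inl h) _ _ h3)
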